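/- Let G be a nilpotent subgroup of Homeo₊(ℝ) in which every element has a nonempty fixed point set, and suppose G has no global fixed point (Fix(G) = ∅). Then there exist subgroups A ⊴ B ≤ G with [B,B] ≤ A, a closed bounded interval I₀ with Fix(A) ∩ I₀ = End(I₀), and an infinite tower (Iᵢ, hᵢ)_{i≥1} with hᵢ ∈ B, I₀ ⊆ int(I₁), Iᵢ ⊆ int(I_{i+1}), and Fix(hᵢ) ∩ Iᵢ = End(Iᵢ) for all i. -/

import Mathlib

open Set MeasureTheory
open scoped NNReal

/-- Orientation-preserving homeomorphisms of ℝ, modelled as order-isomorphisms of ℝ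
(every order-isomorphism of ℝ is a strictly increasing homeomorphism and conversely). -/
abbrev HomeoR := ℝ ≃o ℝ

/-- The fixed point set of `f`. -/
def FixSet (f : HomeoR) : Set ℝ := {x : ℝ | f x = x}

/-- `f` and `g` are crossed with `f` in the distinguished role: there is an interval
`(a,b)` with endpoints possibly `±∞` such that `Fix(f) ∩ [a,b] = {a,b}` while `g`
maps `a` or `b` into `(a,b)`. -/
def CrossedAt (f g : HomeoR) : Prop :=
  ∃ a b : EReal, a < b ∧
    ({x : ℝ | a ≤ (x : EReal) ∧ (x : EReal) ≤ b} ∩ FixSet f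
      = {x : ℝ | (x : EReal) = a ∨ (x : EReal) = b}) ∧
    (∃ x : ℝ, ((x : EReal) = a ∨ (x : EReal) = b) ∧
      a < (g x : EReal) ∧ (g x : EReal) < b)

/-- Two elements are crossed. -/
def Crossed (f g : HomeoR) : Prop := CrossedAt f g ∨ CrossedAt g f

/-- `μ` is a (nonzero) `G`-invariant Radon measure on ℝ. -/
def InvariantRadon (G : Subgroup HomeoR) (μ : Measure ℝ) : Prop :=
  μ ≠ 0 ∧ IsFiniteMeasureOnCompacts μ ∧ ∀ g ∈ G, Measure.map (⇑g) μ = μ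

/-- `Λ` is a nonempty minimal closed `G`-invariant subset of ℝ. -/
def MinimalSet (G : Subgroup HomeoR) (Λ : Set ℝ) : Prop :=
  Λ.Nonempty ∧ IsClosed Λ ∧ (∀ g ∈ G, ⇑g '' Λ = Λ) ∧
    ∀ Λ' ⊆ Λ, Λ'.Nonempty → IsClosed Λ' → (∀ g ∈ G, ⇑g '' Λ' = Λ') → Λ' = Λ

namespace NilpTower

open Filter Topology

lemma mul_apply (f g : HomeoR) (x : ℝ) : (f * g) x = f (g x) := rfl

lemma inv_apply_apply (f : HomeoR) (x : ℝ) : f⁻¹ (f x) = x := by simp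

lemma apply_inv_apply (f : HomeoR) (x : ℝ) : f (f⁻¹ x) = x := by simp

lemma isClosed_fixSet (f : HomeoR) : IsClosed (FixSet f) :=
  isClosed_eq f.continuous continuous_id

lemma inv_fixed {f : HomeoR} {x : ℝ} (h : f x = x) : f⁻¹ x = x := by
  conv_lhs => rw [← h]
  exact inv_apply_apply f x

lemma pow_apply (f : HomeoR) (n : ℕ) (x : ℝ) : (f ^ n) x = f^[n] x := by
  induction n with
  | zero => simp
  | succ k ih => rw [pow_succ', Function.iterate_succ']; simpa using congrArg f ih

lemma zpow_fixed {f : HomeoR} {x : ℝ} (h : f x = x) (k : ℤ) : (f ^ k) x = x := by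
  have hn : ∀ (g : HomeoR), g x = x → ∀ n : ℕ, (g ^ n) x = x := by
    intro g hg n
    rw [pow_apply]
    exact Function.iterate_fixed hg n
  cases k with
  | ofNat n => simpa using hn f h n
  | negSucc n =>
      rw [zpow_negSucc, ← inv_pow]
      exact hn f⁻¹ (inv_fixed h) (n + 1)

/-- Mal'cev pair of words. -/
def mal {H : Type*} [Group H] : ℕ → H → H → H × H
  | 0, x, y => (x, y)
  | (n+1), x, y => ((mal n x y).1 * (mal n x y).2, (mal n x y).2 * (mal n x y).1)

lemma mal_map {H K : Type*} [Group H] [Group K] (ψ : H →* K) (n : ℕ) (x y : H) :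
    mal n (ψ x) (ψ y) = (ψ (mal n x y).1, ψ (mal n x y).2) := by
  induction n with
  | zero => rfl
  | succ k ih => simp [mal, ih]

lemma mal_diff_mem {H : Type*} [Group H] (n : ℕ) (x y : H) :
    (mal n x y).1 * ((mal n x y).2)⁻¹ ∈ Subgroup.lowerCentralSeries (⊤ : Subgroup H) n := by
  induction n with
  | zero => simp [lowerCentralSeries_zero]
  | succ k ih =>
      set u := (mal k x y).1
      set v := (mal k x y).2
      set w := u * v⁻¹ with hw
      have hmem : w * v * w⁻¹ * v⁻¹ ∈ Subgroup.lowerCentralSeries (⊤ : Subgroup H) (k+1) := by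
        rw [lowerCentralSeries_succ]
        exact Subgroup.subset_closure ⟨w, ih, v, Subgroup.mem_top v, rfl⟩
      have : (mal (k+1) x y).1 * ((mal (k+1) x y).2)⁻¹ = w * v * w⁻¹ * v⁻¹ := by
        show (u * v) * (v * u)⁻¹ = w * v * w⁻¹ * v⁻¹
        rw [hw]; group
      rw [this]; exact hmem

lemma malcev {H : Type*} [Group H] (h : Group.IsNilpotent H) :
    ∃ n, ∀ x y : H, (mal n x y).1 = (mal n x y).2 := by
  obtain ⟨n, hn⟩ := nilpotent_iff_lowerCentralSeries.mp h
  refine ⟨n, fun x y => ?_⟩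
  have := mal_diff_mem n x y
  rw [hn, Subgroup.mem_bot] at this
  exact mul_inv_eq_one.mp this

lemma pingpong (G : Subgroup HomeoR) (hnilp : Group.IsNilpotent ↥G)
    {s t : HomeoR} (hs : s ∈ G) (ht : t ∈ G) {U V : Set ℝ}
    (hdisj : ∀ z, z ∈ U → z ∈ V → False)
    (hU : ∀ z ∈ U ∪ V, s z ∈ U) (hV : ∀ z ∈ U ∪ V, t z ∈ V)
    {z₀ : ℝ} (hz₀ : z₀ ∈ U ∪ V) : False := by
  obtain ⟨n, hn⟩ := malcev hnilp
  set S : ↥G := ⟨s, hs⟩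
  set T : ↥G := ⟨t, ht⟩
  have key : ∀ m, (∀ z ∈ U ∪ V, ((mal m S T).1 : HomeoR) z ∈ U) ∧
      (∀ z ∈ U ∪ V, ((mal m S T).2 : HomeoR) z ∈ V) := by
    intro m
    induction m with
    | zero => exact ⟨hU, hV⟩
    | succ k ih =>
        constructor
        · intro z hz
          have h2 := ih.2 z hz
          have h1 := ih.1 (((mal k S T).2 : HomeoR) z) (Or.inr h2)
          simpa [mal, mul_apply] using h1
        · intro z hz
          have h1 := ih.1 z hz
          have h2 := ih.2 (((mal k S T).1 : HomeoR) z) (Or.inl h1)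
          simpa [mal, mul_apply] using h2
  have h1 := (key n).1 z₀ hz₀
  have h2 := (key n).2 z₀ hz₀
  rw [hn S T] at h1
  exact hdisj _ h1 h2


lemma endpoint_lt (φ : HomeoR) {a : EReal} {y : ℝ} (h1 : a < (y : EReal))
    (hfix : ∀ r : ℝ, (r : EReal) = a → φ r = r) : a < ((φ y : ℝ) : EReal) := by
  induction a with
  | bot => exact EReal.bot_lt_coe _
  | coe r =>
      have hr : φ r = r := hfix r rfl
      have hry : r < y := EReal.coe_lt_coe_iff.mp h1
      have : r < φ y := hr ▸ φ.strictMono hry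
      exact EReal.coe_lt_coe_iff.mpr this
  | top => exact absurd h1 (by simp)

lemma endpoint_gt (φ : HomeoR) {b : EReal} {y : ℝ} (h2 : (y : EReal) < b)
    (hfix : ∀ r : ℝ, (r : EReal) = b → φ r = r) : ((φ y : ℝ) : EReal) < b := by
  induction b with
  | bot => exact absurd h2 (by simp)
  | coe r =>
      have hr : φ r = r := hfix r rfl
      have hry : y < r := EReal.coe_lt_coe_iff.mp h2
      have : φ y < r := hr ▸ φ.strictMono hry
      exact EReal.coe_lt_coe_iff.mpr this
  | top => exact EReal.coe_lt_top _

lemma exists_between_coe_lt {b : EReal} {d : ℝ} (hd : (d : EReal) < b) :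
    ∃ e : ℝ, d < e ∧ (e : EReal) < b := by
  induction b with
  | bot => exact absurd hd (by simp)
  | coe r =>
      rw [EReal.coe_lt_coe_iff] at hd
      exact ⟨(d + r) / 2, by linarith, EReal.coe_lt_coe_iff.mpr (by linarith)⟩
  | top => exact ⟨d + 1, by linarith, EReal.coe_lt_top _⟩

lemma exists_between_lt_coe {a : EReal} {d : ℝ} (hd : a < (d : EReal)) :
    ∃ e : ℝ, e < d ∧ a < (e : EReal) := by
  induction a with
  | bot => exact ⟨d - 1, by linarith, EReal.bot_lt_coe _⟩
  | coe r =>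
      rw [EReal.coe_lt_coe_iff] at hd
      exact ⟨(r + d) / 2, by linarith, EReal.coe_lt_coe_iff.mpr (by linarith)⟩
  | top => exact absurd hd (by simp)

lemma core_left (G : Subgroup HomeoR) (hnilp : Group.IsNilpotent ↥G)
    {g φ : HomeoR} (hg : g ∈ G) (hφ : φ ∈ G)
    {x : ℝ} {b : EReal} (hxb : (x : EReal) < b)
    (hφx : φ x = x)
    (hφJ : ∀ y : ℝ, x < y → (y : EReal) < b → (x < φ y ∧ ((φ y : ℝ) : EReal) < b))
    (hφlt : ∀ y : ℝ, x < y → (y : EReal) < b → φ y < y)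
    (hxd : x < g x) (hdb : ((g x : ℝ) : EReal) < b) : False := by
  set d := g x with hd
  obtain ⟨e, hde, heb⟩ := exists_between_coe_lt hdb
  set c := (x + d) / 2 with hc
  have hxc : x < c := by rw [hc]; linarith
  have hcd : c < d := by rw [hc]; linarith
  set o : ℕ → ℝ := fun n => φ^[n] e with ho
  have hoJ : ∀ n, x < o n ∧ ((o n : ℝ) : EReal) < b := by
    intro n
    induction n with
    | zero => exact ⟨hxd.trans hde, heb⟩
    | succ m ih =>
        have : o (m + 1) = φ (o m) := Function.iterate_succ_apply' _ _ _
        rw [this]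
        exact hφJ (o m) ih.1 ih.2
  have hostep : ∀ n, o (n + 1) < o n := by
    intro n
    have h1 : o (n + 1) = φ (o n) := Function.iterate_succ_apply' _ _ _
    rw [h1]
    exact hφlt (o n) (hoJ n).1 (hoJ n).2
  have hanti : Antitone o := antitone_nat_of_succ_le fun n => (hostep n).le
  have hbdd : BddBelow (range o) := ⟨x, by rintro _ ⟨n, rfl⟩; exact (hoJ n).1.le⟩
  have hconv : Tendsto o atTop (𝓝 (⨅ n, o n)) := tendsto_atTop_ciInf hanti hbdd
  set l := ⨅ n, o n with hl
  have hlx : l = x := by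
    have hxl : x ≤ l := le_ciInf fun n => (hoJ n).1.le
    rcases eq_or_lt_of_le hxl with h | h
    · exact h.symm
    · exfalso
      have hle : l ≤ e := ciInf_le hbdd 0
      have hlb : (l : EReal) < b := lt_of_le_of_lt (EReal.coe_le_coe_iff.mpr hle) heb
      have hfixl : φ l = l := by
        have h1 : Tendsto (fun n => o (n + 1)) atTop (𝓝 l) :=
          hconv.comp (tendsto_add_atTop_nat 1)
        have h2 : Tendsto (fun n => φ (o n)) atTop (𝓝 (φ l)) :=
          (φ.continuous.tendsto l).comp hconv
        have he : (fun n => φ (o n)) = fun n => o (n + 1) :=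
          funext fun n => (Function.iterate_succ_apply' _ _ _).symm
        rw [he] at h2
        exact tendsto_nhds_unique h2 h1
      exact absurd hfixl (ne_of_lt (hφlt l h hlb))
  have hlc : l < c := by rw [hlx]; exact hxc
  obtain ⟨N, hN⟩ := (hconv.eventually_lt_const hlc).exists
  have hgconv : Tendsto (fun n => g (o n)) atTop (𝓝 d) := by
    have := (g.continuous.tendsto l).comp hconv
    rwa [hlx, ← hd] at this
  obtain ⟨M, hM⟩ := (hgconv.eventually_lt_const hde).exists
  have hiter : ∀ k, ∀ z : ℝ, x ≤ z → (z : EReal) < b →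
      x ≤ φ^[k] z ∧ ((φ^[k] z : ℝ) : EReal) < b := by
    intro k
    induction k with
    | zero => intro z h1 h2; exact ⟨h1, h2⟩
    | succ m ih =>
        intro z h1 h2
        obtain ⟨ih1, ih2⟩ := ih z h1 h2
        have hs : φ^[m + 1] z = φ (φ^[m] z) := Function.iterate_succ_apply' _ _ _
        rw [hs]
        rcases eq_or_lt_of_le ih1 with h | h
        · rw [← h, hφx]; exact ⟨le_refl x, hxb⟩
        · exact ⟨(hφJ _ h ih2).1.le, (hφJ _ h ih2).2⟩
  have hmono : ∀ k : ℕ, Monotone (φ^[k] : ℝ → ℝ) := fun k => (φ.strictMono.iterate k).monotone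
  set U := Icc x c with hU
  set V := Icc d e with hV
  have hdisj : ∀ z, z ∈ U → z ∈ V → False := by
    intro z h1 h2
    exact absurd h1.2 (not_le.mpr (lt_of_lt_of_le hcd h2.1))
  have hrange : ∀ z ∈ U ∪ V, x ≤ z ∧ z ≤ e := by
    rintro z (⟨h1, h2⟩ | ⟨h1, h2⟩)
    · exact ⟨h1, h2.trans (hcd.le.trans hde.le)⟩
    · exact ⟨(hxd.trans_le h1).le, h2⟩
  have hzb : ∀ z ∈ U ∪ V, (z : EReal) < b := fun z hz =>
    (EReal.coe_le_coe_iff.mpr (hrange z hz).2).trans_lt heb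
  have hUmap : ∀ z ∈ U ∪ V, (φ ^ N) z ∈ U := by
    intro z hz
    rw [pow_apply]
    obtain ⟨hz1, hz2⟩ := hrange z hz
    refine ⟨(hiter N z hz1 (hzb z hz)).1, ?_⟩
    exact (hmono N hz2).trans hN.le
  have hVmap : ∀ z ∈ U ∪ V, (g * φ ^ M) z ∈ V := by
    intro z hz
    rw [mul_apply, pow_apply]
    obtain ⟨hz1, hz2⟩ := hrange z hz
    constructor
    · exact hd ▸ g.monotone (hiter M z hz1 (hzb z hz)).1
    · exact (g.monotone (hmono M hz2)).trans hM.le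
  exact pingpong G hnilp (pow_mem hφ N) (mul_mem hg (pow_mem hφ M)) hdisj hUmap hVmap
    (Or.inl ⟨le_refl x, hxc.le⟩)

lemma core_right (G : Subgroup HomeoR) (hnilp : Group.IsNilpotent ↥G)
    {g φ : HomeoR} (hg : g ∈ G) (hφ : φ ∈ G)
    {x : ℝ} {a : EReal} (hax : a < (x : EReal))
    (hφx : φ x = x)
    (hφJ : ∀ y : ℝ, a < (y : EReal) → y < x → (a < ((φ y : ℝ) : EReal) ∧ φ y < x))
    (hφgt : ∀ y : ℝ, a < (y : EReal) → y < x → y < φ y)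
    (hdx : g x < x) (had : a < ((g x : ℝ) : EReal)) : False := by
  set d := g x with hd
  obtain ⟨e, hde, hae⟩ := exists_between_lt_coe had
  set c := (d + x) / 2 with hc
  have hcx : c < x := by rw [hc]; linarith
  have hdc : d < c := by rw [hc]; linarith
  set o : ℕ → ℝ := fun n => φ^[n] e with ho
  have hoJ : ∀ n, a < ((o n : ℝ) : EReal) ∧ o n < x := by
    intro n
    induction n with
    | zero => exact ⟨hae, hde.trans hdx⟩
    | succ m ih =>
        have hs : o (m + 1) = φ (o m) := Function.iterate_succ_apply' _ _ _
        rw [hs]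
        exact hφJ (o m) ih.1 ih.2
  have hostep : ∀ n, o n < o (n + 1) := by
    intro n
    have h1 : o (n + 1) = φ (o n) := Function.iterate_succ_apply' _ _ _
    rw [h1]
    exact hφgt (o n) (hoJ n).1 (hoJ n).2
  have hmon : Monotone o := monotone_nat_of_le_succ fun n => (hostep n).le
  have hbdd : BddAbove (range o) := ⟨x, by rintro _ ⟨n, rfl⟩; exact (hoJ n).2.le⟩
  have hconv : Tendsto o atTop (𝓝 (⨆ n, o n)) := tendsto_atTop_ciSup hmon hbdd
  set l := ⨆ n, o n with hl
  have hlx : l = x := by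
    have hxl : l ≤ x := ciSup_le fun n => (hoJ n).2.le
    rcases eq_or_lt_of_le hxl with h | h
    · exact h
    · exfalso
      have hle : e ≤ l := le_ciSup hbdd 0
      have hla : a < (l : EReal) := lt_of_lt_of_le hae (EReal.coe_le_coe_iff.mpr hle)
      have hfixl : φ l = l := by
        have h1 : Tendsto (fun n => o (n + 1)) atTop (𝓝 l) :=
          hconv.comp (tendsto_add_atTop_nat 1)
        have h2 : Tendsto (fun n => φ (o n)) atTop (𝓝 (φ l)) :=
          (φ.continuous.tendsto l).comp hconv
        have he : (fun n => φ (o n)) = fun n => o (n + 1) :=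
          funext fun n => (Function.iterate_succ_apply' _ _ _).symm
        rw [he] at h2
        exact tendsto_nhds_unique h2 h1
      exact absurd hfixl (ne_of_gt (hφgt l hla h))
  have hlc : c < l := by rw [hlx]; exact hcx
  obtain ⟨N, hN⟩ := (hconv.eventually_const_lt hlc).exists
  have hgconv : Tendsto (fun n => g (o n)) atTop (𝓝 d) := by
    have := (g.continuous.tendsto l).comp hconv
    rwa [hlx, ← hd] at this
  obtain ⟨M, hM⟩ := (hgconv.eventually_const_lt hde).exists
  have hiter : ∀ k, ∀ z : ℝ, a < (z : EReal) → z ≤ x →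
      a < ((φ^[k] z : ℝ) : EReal) ∧ φ^[k] z ≤ x := by
    intro k
    induction k with
    | zero => intro z h1 h2; exact ⟨h1, h2⟩
    | succ m ih =>
        intro z h1 h2
        obtain ⟨ih1, ih2⟩ := ih z h1 h2
        have hs : φ^[m + 1] z = φ (φ^[m] z) := Function.iterate_succ_apply' _ _ _
        rw [hs]
        rcases eq_or_lt_of_le ih2 with h | h
        · rw [h, hφx]; exact ⟨hax, le_refl x⟩
        · exact ⟨(hφJ _ ih1 h).1, (hφJ _ ih1 h).2.le⟩
  have hmono : ∀ k : ℕ, Monotone (φ^[k] : ℝ → ℝ) := fun k => (φ.strictMono.iterate k).monotone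
  set U := Icc c x with hU
  set V := Icc e d with hV
  have hdisj : ∀ z, z ∈ U → z ∈ V → False := by
    intro z h1 h2
    exact absurd h1.1 (not_le.mpr (lt_of_le_of_lt h2.2 hdc))
  have hrange : ∀ z ∈ U ∪ V, e ≤ z ∧ z ≤ x := by
    rintro z (⟨h1, h2⟩ | ⟨h1, h2⟩)
    · exact ⟨hde.le.trans (hdc.le.trans h1), h2⟩
    · exact ⟨h1, h2.trans (hdx.le)⟩
  have hza : ∀ z ∈ U ∪ V, a < (z : EReal) := fun z hz =>
    hae.trans_le (EReal.coe_le_coe_iff.mpr (hrange z hz).1)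
  have hUmap : ∀ z ∈ U ∪ V, (φ ^ N) z ∈ U := by
    intro z hz
    rw [pow_apply]
    obtain ⟨hz1, hz2⟩ := hrange z hz
    refine ⟨hN.le.trans (hmono N hz1), (hiter N z (hza z hz) hz2).2⟩
  have hVmap : ∀ z ∈ U ∪ V, (g * φ ^ M) z ∈ V := by
    intro z hz
    rw [mul_apply, pow_apply]
    obtain ⟨hz1, hz2⟩ := hrange z hz
    constructor
    · exact hM.le.trans (g.monotone (hmono M hz1))
    · exact hd ▸ g.monotone (hiter M z (hza z hz) hz2).2
  exact pingpong G hnilp (pow_mem hφ N) (mul_mem hg (pow_mem hφ M)) hdisj hUmap hVmap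
    (Or.inl ⟨hcx.le, le_refl x⟩)

theorem no_crossedAt (G : Subgroup HomeoR) (hnilp : Group.IsNilpotent ↥G)
    {f g : HomeoR} (hf : f ∈ G) (hg : g ∈ G) : ¬ CrossedAt f g := by
  rintro ⟨a, b, hab, hgap, x, hx, hgx1, hgx2⟩
  have hmm := Set.ext_iff.mp hgap
  have hfixEnd : ∀ y : ℝ, ((y : EReal) = a ∨ (y : EReal) = b) → f y = y :=
    fun y hy => ((hmm y).mpr hy).2
  have hfixEnd' : ∀ y : ℝ, ((y : EReal) = a ∨ (y : EReal) = b) → f⁻¹ y = y :=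
    fun y hy => inv_fixed (hfixEnd y hy)
  have hNoFix : ∀ y : ℝ, a < (y : EReal) → (y : EReal) < b → f y ≠ y := by
    intro y h1 h2 hfy
    rcases (hmm y).mp ⟨⟨h1.le, h2.le⟩, hfy⟩ with h | h
    · exact absurd h.symm (ne_of_lt h1)
    · exact absurd h (ne_of_lt h2)
  have hsign : (∀ y : ℝ, a < (y : EReal) → (y : EReal) < b → f y < y) ∨
      (∀ y : ℝ, a < (y : EReal) → (y : EReal) < b → y < f y) := by
    by_contra hcon
    push_neg at hcon
    obtain ⟨⟨y₁, hy₁a, hy₁b, h₁⟩, ⟨y₂, hy₂a, hy₂b, h₂⟩⟩ := hcon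
    have h₁' : y₁ < f y₁ := lt_of_le_of_ne h₁ (Ne.symm (hNoFix y₁ hy₁a hy₁b))
    have h₂' : f y₂ < y₂ := lt_of_le_of_ne h₂ (hNoFix y₂ hy₂a hy₂b)
    set F : ℝ → ℝ := fun z => f z - z with hF
    have hFc : Continuous F := f.continuous.sub continuous_id
    rcases lt_trichotomy y₁ y₂ with h | h | h
    · have hsub : Ioo (F y₂) (F y₁) ⊆ F '' Ioo y₁ y₂ :=
        intermediate_value_Ioo' h.le hFc.continuousOn
      have h0 : (0 : ℝ) ∈ Ioo (F y₂) (F y₁) := ⟨by simp only [hF]; linarith, by simp only [hF]; linarith⟩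
      obtain ⟨z, hz, hFz⟩ := hsub h0
      have hfz : f z = z := by have h2 : f z - z = 0 := hFz; linarith
      exact hNoFix z (hy₁a.trans (EReal.coe_lt_coe_iff.mpr hz.1))
        ((EReal.coe_lt_coe_iff.mpr hz.2).trans hy₂b) hfz
    · rw [h] at h₁'; linarith
    · have hsub : Ioo (F y₂) (F y₁) ⊆ F '' Ioo y₂ y₁ :=
        intermediate_value_Ioo h.le hFc.continuousOn
      have h0 : (0 : ℝ) ∈ Ioo (F y₂) (F y₁) := ⟨by simp only [hF]; linarith, by simp only [hF]; linarith⟩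
      obtain ⟨z, hz, hFz⟩ := hsub h0
      have hfz : f z = z := by have h2 : f z - z = 0 := hFz; linarith
      exact hNoFix z (hy₂a.trans (EReal.coe_lt_coe_iff.mpr hz.1))
        ((EReal.coe_lt_coe_iff.mpr hz.2).trans hy₁b) hfz
  rcases hx with hxa | hxb
  · -- ↑x = a : left case
    obtain ⟨φ, hφG, hφEnd, hφlt⟩ : ∃ φ : HomeoR, φ ∈ G ∧
        (∀ y : ℝ, ((y : EReal) = a ∨ (y : EReal) = b) → φ y = y) ∧
        (∀ y : ℝ, a < (y : EReal) → (y : EReal) < b → φ y < y) := by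
      rcases hsign with hs | hs
      · exact ⟨f, hf, hfixEnd, hs⟩
      · refine ⟨f⁻¹, inv_mem hf, hfixEnd', fun y h1 h2 => ?_⟩
        have hJ1 : a < ((f⁻¹ y : ℝ) : EReal) :=
          endpoint_lt f⁻¹ h1 (fun r hr => hfixEnd' r (Or.inl hr))
        have hJ2 : ((f⁻¹ y : ℝ) : EReal) < b :=
          endpoint_gt f⁻¹ h2 (fun r hr => hfixEnd' r (Or.inr hr))
        have := hs (f⁻¹ y) hJ1 hJ2
        rwa [apply_inv_apply] at this
    refine core_left G hnilp hg hφG (x := x) (b := b) (hxa ▸ hab) (hφEnd x (Or.inl hxa))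
      (fun y h1 h2 => ?_) (fun y h1 h2 => hφlt y (hxa ▸ EReal.coe_lt_coe_iff.mpr h1) h2)
      ?_ ?_
    · have hya : a < (y : EReal) := hxa ▸ EReal.coe_lt_coe_iff.mpr h1
      refine ⟨?_, endpoint_gt φ h2 (fun r hr => hφEnd r (Or.inr hr))⟩
      have := endpoint_lt φ hya (fun r hr => hφEnd r (Or.inl hr))
      rw [← hxa] at this
      exact EReal.coe_lt_coe_iff.mp this
    · exact EReal.coe_lt_coe_iff.mp (hxa ▸ hgx1)
    · exact hgx2
  · -- ↑x = b : right case
    obtain ⟨φ, hφG, hφEnd, hφgt⟩ : ∃ φ : HomeoR, φ ∈ G ∧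
        (∀ y : ℝ, ((y : EReal) = a ∨ (y : EReal) = b) → φ y = y) ∧
        (∀ y : ℝ, a < (y : EReal) → (y : EReal) < b → y < φ y) := by
      rcases hsign with hs | hs
      · refine ⟨f⁻¹, inv_mem hf, hfixEnd', fun y h1 h2 => ?_⟩
        have hJ1 : a < ((f⁻¹ y : ℝ) : EReal) :=
          endpoint_lt f⁻¹ h1 (fun r hr => hfixEnd' r (Or.inl hr))
        have hJ2 : ((f⁻¹ y : ℝ) : EReal) < b :=
          endpoint_gt f⁻¹ h2 (fun r hr => hfixEnd' r (Or.inr hr))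
        have := hs (f⁻¹ y) hJ1 hJ2
        rwa [apply_inv_apply] at this
      · exact ⟨f, hf, hfixEnd, hs⟩
    refine core_right G hnilp hg hφG (x := x) (a := a) (hxb ▸ hab) (hφEnd x (Or.inr hxb))
      (fun y h1 h2 => ?_) (fun y h1 h2 => hφgt y h1 (hxb ▸ EReal.coe_lt_coe_iff.mpr h2))
      ?_ ?_
    · have hyb : (y : EReal) < b := hxb ▸ EReal.coe_lt_coe_iff.mpr h2
      refine ⟨endpoint_lt φ h1 (fun r hr => hφEnd r (Or.inl hr)), ?_⟩
      have := endpoint_gt φ hyb (fun r hr => hφEnd r (Or.inr hr))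
      rw [← hxb] at this
      exact EReal.coe_lt_coe_iff.mp this
    · exact EReal.coe_lt_coe_iff.mp (hxb ▸ hgx2)
    · exact hgx1

variable (G : Subgroup HomeoR)

/-- Every element of a fixed-point-free subgroup has fixed points arbitrarily high. -/
lemma fix_unbdd_above (hnilp : Group.IsNilpotent ↥G)
    {B : Subgroup HomeoR} (hBG : B ≤ G)
    (hB : ∀ w : ℝ, ∃ k ∈ B, k w ≠ w)
    {g : HomeoR} (hgB : g ∈ B) (hne : (FixSet g).Nonempty) :
    ∀ r : ℝ, ∃ y ∈ FixSet g, r < y := by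
  intro r
  by_contra hcon
  push_neg at hcon
  have hbdd : BddAbove (FixSet g) := ⟨r, fun y hy => hcon y hy⟩
  set P := sSup (FixSet g) with hP
  have hPmem : P ∈ FixSet g := (isClosed_fixSet g).csSup_mem hne hbdd
  obtain ⟨k, hkB, hk⟩ := hB P
  obtain ⟨k', hk'B, hk'⟩ : ∃ k' ∈ B, P < k' P := by
    rcases lt_or_gt_of_ne hk with h | h
    · refine ⟨k⁻¹, inv_mem hkB, ?_⟩
      have := k⁻¹.strictMono h
      rwa [inv_apply_apply] at this
    · exact ⟨k, hkB, h⟩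
  refine no_crossedAt G hnilp (hBG hgB) (hBG hk'B) ⟨(P : EReal), ⊤, EReal.coe_lt_top _, ?_, P,
    Or.inl rfl, EReal.coe_lt_coe_iff.mpr hk', EReal.coe_lt_top _⟩
  ext y
  simp only [Set.mem_inter_iff, Set.mem_setOf_eq, le_top, and_true]
  constructor
  · rintro ⟨h1, h2⟩
    exact Or.inl (EReal.coe_eq_coe_iff.mpr (le_antisymm (le_csSup hbdd h2) (EReal.coe_le_coe_iff.mp h1)))
  · rintro (h | h)
    · have : y = P := EReal.coe_eq_coe_iff.mp h
      exact ⟨le_of_eq (congrArg _ this.symm), this ▸ hPmem⟩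
    · exact absurd h (EReal.coe_ne_top y)

lemma fix_unbdd_below (hnilp : Group.IsNilpotent ↥G)
    {B : Subgroup HomeoR} (hBG : B ≤ G)
    (hB : ∀ w : ℝ, ∃ k ∈ B, k w ≠ w)
    {g : HomeoR} (hgB : g ∈ B) (hne : (FixSet g).Nonempty) :
    ∀ r : ℝ, ∃ y ∈ FixSet g, y < r := by
  intro r
  by_contra hcon
  push_neg at hcon
  have hbdd : BddBelow (FixSet g) := ⟨r, fun y hy => hcon y hy⟩
  set P := sInf (FixSet g) with hP
  have hPmem : P ∈ FixSet g := (isClosed_fixSet g).csInf_mem hne hbdd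
  obtain ⟨k, hkB, hk⟩ := hB P
  obtain ⟨k', hk'B, hk'⟩ : ∃ k' ∈ B, k' P < P := by
    rcases lt_or_gt_of_ne hk with h | h
    · exact ⟨k, hkB, h⟩
    · refine ⟨k⁻¹, inv_mem hkB, ?_⟩
      have := k⁻¹.strictMono h
      rwa [inv_apply_apply] at this
  refine no_crossedAt G hnilp (hBG hgB) (hBG hk'B) ⟨⊥, (P : EReal), EReal.bot_lt_coe _, ?_, P,
    Or.inr rfl, EReal.bot_lt_coe _, EReal.coe_lt_coe_iff.mpr hk'⟩
  ext y
  simp only [Set.mem_inter_iff, Set.mem_setOf_eq, bot_le, true_and]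
  constructor
  · rintro ⟨h1, h2⟩
    refine Or.inr (EReal.coe_eq_coe_iff.mpr (le_antisymm (EReal.coe_le_coe_iff.mp h1) (csInf_le hbdd h2)))
  · rintro (h | h)
    · exact absurd h (EReal.coe_ne_bot y)
    · have : y = P := EReal.coe_eq_coe_iff.mp h
      exact ⟨le_of_eq (congrArg _ this), this ▸ hPmem⟩

/-- Extract a bounded gap of a closed set around an interval it misses. -/
lemma gap_extract {S : Set ℝ} (hcl : IsClosed S)
    (habove : ∀ r : ℝ, ∃ y ∈ S, r < y) (hbelow : ∀ r : ℝ, ∃ y ∈ S, y < r)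
    {p q : ℝ} (hpq : p ≤ q) (hem : S ∩ Icc p q = ∅) :
    ∃ P Q : ℝ, P < p ∧ q < Q ∧ S ∩ Icc P Q = {P, Q} := by
  have hpS : p ∉ S := fun h => (Set.eq_empty_iff_forall_notMem.mp hem p) ⟨h, le_refl p, hpq⟩
  have hqS : q ∉ S := fun h => (Set.eq_empty_iff_forall_notMem.mp hem q) ⟨h, hpq, le_refl q⟩
  obtain ⟨y₀, hy₀S, hy₀⟩ := hbelow p
  obtain ⟨z₀, hz₀S, hz₀⟩ := habove q
  set SL := S ∩ Iic p with hSL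
  set SR := S ∩ Ici q with hSR
  have hSLcl : IsClosed SL := hcl.inter isClosed_Iic
  have hSRcl : IsClosed SR := hcl.inter isClosed_Ici
  have hSLne : SL.Nonempty := ⟨y₀, hy₀S, hy₀.le⟩
  have hSRne : SR.Nonempty := ⟨z₀, hz₀S, hz₀.le⟩
  have hSLbdd : BddAbove SL := ⟨p, fun y hy => hy.2⟩
  have hSRbdd : BddBelow SR := ⟨q, fun y hy => hy.2⟩
  set P := sSup SL with hP
  set Q := sInf SR with hQ
  have hPmem : P ∈ SL := hSLcl.csSup_mem hSLne hSLbdd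
  have hQmem : Q ∈ SR := hSRcl.csInf_mem hSRne hSRbdd
  have hPle : P ≤ p := hPmem.2
  have hQge : q ≤ Q := hQmem.2
  have hPp : P < p := by
    rcases lt_or_eq_of_le hPle with h | h
    · exact h
    · exact absurd (h ▸ hPmem.1) hpS
  have hqQ : q < Q := by
    rcases lt_or_eq_of_le hQge with h | h
    · exact h
    · exact absurd (h ▸ hQmem.1) hqS
  refine ⟨P, Q, hPp, hqQ, ?_⟩
  ext y
  simp only [Set.mem_inter_iff, Set.mem_Icc, Set.mem_insert_iff, Set.mem_singleton_iff]
  constructor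
  · rintro ⟨hyS, hy1, hy2⟩
    rcases le_or_gt y p with h | h
    · exact Or.inl (le_antisymm (le_csSup hSLbdd ⟨hyS, h⟩) hy1)
    · rcases le_or_gt y q with h' | h'
      · have hmem : y ∈ S ∩ Icc p q := ⟨hyS, h.le, h'⟩
        rw [hem] at hmem
        exact absurd hmem (notMem_empty y)
      · exact Or.inr (le_antisymm hy2 (csInf_le hSRbdd ⟨hyS, h'.le⟩))
  · rintro (rfl | rfl)
    · exact ⟨hPmem.1, le_refl _, (hPp.trans_le (hpq.trans hqQ.le)).le⟩
    · exact ⟨hQmem.1, ((hPp.trans_le hpq).trans hqQ).le, le_refl _⟩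

/-- Conjugation transports a fixed-point gap. -/
lemma conj_gap {h : HomeoR} (g : HomeoR) {p q : ℝ}
    (hgap : FixSet h ∩ Icc p q = {p, q}) :
    FixSet (g * h * g⁻¹) ∩ Icc (g p) (g q) = {g p, g q} := by
  have hiff' : ∀ u : ℝ, (h u = u ∧ (p ≤ u ∧ u ≤ q)) ↔ (u = p ∨ u = q) := by
    intro u
    have := Set.ext_iff.mp hgap u
    simpa [Set.mem_inter_iff, Set.mem_Icc, FixSet, Set.mem_insert_iff,
      Set.mem_singleton_iff] using this
  ext y
  simp only [Set.mem_inter_iff, Set.mem_Icc, FixSet, Set.mem_setOf_eq, Set.mem_insert_iff,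
    Set.mem_singleton_iff]
  have e1 : (g * h * g⁻¹) y = y ↔ h (g⁻¹ y) = g⁻¹ y := by
    constructor
    · intro H
      have := congrArg (⇑g⁻¹) H
      rwa [mul_apply, mul_apply, inv_apply_apply] at this
    · intro H
      have := congrArg (⇑g) H
      rw [apply_inv_apply] at this
      rw [mul_apply, mul_apply, this]
  have e2 : ∀ u : ℝ, g u ≤ y ↔ u ≤ g⁻¹ y := by
    intro u
    constructor
    · intro H
      have := g⁻¹.monotone H
      rwa [inv_apply_apply] at this
    · intro H
      have := g.monotone H
      rwa [apply_inv_apply] at this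
  have e3 : ∀ u : ℝ, y ≤ g u ↔ g⁻¹ y ≤ u := by
    intro u
    constructor
    · intro H
      have := g⁻¹.monotone H
      rwa [inv_apply_apply] at this
    · intro H
      have := g.monotone H
      rwa [apply_inv_apply] at this
  have e4 : ∀ u : ℝ, y = g u ↔ g⁻¹ y = u := by
    intro u
    constructor
    · intro H; rw [H, inv_apply_apply]
    · intro H; rw [← H, apply_inv_apply]
  constructor
  · rintro ⟨hyF, hy1, hy2⟩
    have h' := (hiff' (g⁻¹ y)).mp ⟨e1.mp hyF, (e2 p).mp hy1, (e3 q).mp hy2⟩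
    rcases h' with h' | h'
    · exact Or.inl ((e4 p).mpr h')
    · exact Or.inr ((e4 q).mpr h')
  · have hpq : p ≤ q := ((hiff' p).mpr (Or.inl rfl)).2.2
    rintro (rfl | rfl)
    · refine ⟨e1.mpr ?_, le_refl _, g.monotone hpq⟩
      rw [inv_apply_apply]
      exact ((hiff' p).mpr (Or.inl rfl)).1
    · refine ⟨e1.mpr ?_, g.monotone hpq, le_refl _⟩
      rw [inv_apply_apply]
      exact ((hiff' q).mpr (Or.inr rfl)).1

lemma fix_empty_between (hnilp : Group.IsNilpotent ↥G) {h g : HomeoR}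
    (hhG : h ∈ G) (hgG : g ∈ G)
    (habove : ∀ r : ℝ, ∃ y ∈ FixSet g, r < y) (hbelow : ∀ r : ℝ, ∃ y ∈ FixSet g, y < r)
    {p q : ℝ} (hpq : p < q) (hgap : FixSet h ∩ Icc p q = {p, q})
    (hgp : g p ≠ p) (hgq : g q ≠ q) :
    FixSet g ∩ Icc p q = ∅ := by
  have hiff : ∀ u : ℝ, (h u = u ∧ (p ≤ u ∧ u ≤ q)) ↔ (u = p ∨ u = q) := by
    intro u
    have := Set.ext_iff.mp hgap u
    simpa [Set.mem_inter_iff, Set.mem_Icc, FixSet, Set.mem_insert_iff,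
      Set.mem_singleton_iff] using this
  have hhp : h p = p := ((hiff p).mpr (Or.inl rfl)).1
  have hhq : h q = q := ((hiff q).mpr (Or.inr rfl)).1
  have hIn : ∀ z : ℝ, p < z → z < q → (h z ≠ z ∧ p < h z ∧ h z < q) := by
    intro z h1 h2
    refine ⟨?_, ?_, ?_⟩
    · intro hz
      rcases (hiff z).mp ⟨hz, h1.le, h2.le⟩ with e | e
      · exact absurd e (ne_of_gt h1)
      · exact absurd e (ne_of_lt h2)
    · calc p = h p := hhp.symm
        _ < h z := h.strictMono h1
    · calc h z < h q := h.strictMono h2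
        _ = q := hhq
  by_contra hcon
  obtain ⟨x, hxg, hx1, hx2⟩ := Set.nonempty_iff_ne_empty.mpr hcon
  have hxp : p < x := lt_of_le_of_ne hx1 (fun e => hgp (by rw [e]; exact hxg))
  have hxq : x < q := lt_of_le_of_ne hx2 (fun e => hgq (by rw [← e]; exact hxg))
  have hgcl := isClosed_fixSet g
  -- left gap (r, s) of Fix g
  set s := sInf (FixSet g ∩ Icc p x) with hs_def
  have hsne : (FixSet g ∩ Icc p x).Nonempty := ⟨x, hxg, hxp.le, le_refl x⟩
  have hsbdd : BddBelow (FixSet g ∩ Icc p x) := ⟨p, fun y hy => hy.2.1⟩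
  have hsmem : s ∈ FixSet g ∩ Icc p x :=
    (hgcl.inter isClosed_Icc).csInf_mem hsne hsbdd
  have hps : p < s := lt_of_le_of_ne hsmem.2.1 (fun e => hgp (by rw [e]; exact hsmem.1))
  have hsx : s ≤ x := hsmem.2.2
  set r := sSup (FixSet g ∩ Iic p) with hr_def
  obtain ⟨y₀, hy₀g, hy₀⟩ := hbelow p
  have hrne : (FixSet g ∩ Iic p).Nonempty := ⟨y₀, hy₀g, hy₀.le⟩
  have hrbdd : BddAbove (FixSet g ∩ Iic p) := ⟨p, fun y hy => hy.2⟩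
  have hrmem : r ∈ FixSet g ∩ Iic p :=
    (hgcl.inter isClosed_Iic).csSup_mem hrne hrbdd
  have hrp : r < p := lt_of_le_of_ne hrmem.2 (fun e => hgp (by rw [← e]; exact hrmem.1))
  have gap1 : ∀ y : ℝ, ((r ≤ y ∧ y ≤ s) ∧ g y = y) ↔ (y = r ∨ y = s) := by
    intro y
    constructor
    · rintro ⟨⟨h1, h2⟩, hy⟩
      rcases le_or_gt y p with hyp | hyp
      · exact Or.inl (le_antisymm (le_csSup hrbdd ⟨hy, hyp⟩) h1)
      · exact Or.inr (le_antisymm h2 (csInf_le hsbdd ⟨hy, hyp.le, h2.trans hsx⟩))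
    · rintro (rfl | rfl)
      · exact ⟨⟨le_refl _, (hrp.trans hps).le⟩, hrmem.1⟩
      · exact ⟨⟨(hrp.trans hps).le, le_refl _⟩, hsmem.1⟩
  have hsq : s < q := lt_of_le_of_lt hsx hxq
  have hsIn := hIn s hps hsq
  have hs_gt : s < h s := by
    rcases lt_trichotomy (h s) s with hlt | heq | hgt
    · exfalso
      refine no_crossedAt G hnilp hgG hhG ⟨(r : EReal), (s : EReal),
        EReal.coe_lt_coe_iff.mpr (hrp.trans hps), ?_, s, Or.inr rfl,
        EReal.coe_lt_coe_iff.mpr (hrp.trans hsIn.2.1), EReal.coe_lt_coe_iff.mpr hlt⟩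
      ext y
      simp only [Set.mem_inter_iff, Set.mem_setOf_eq, EReal.coe_le_coe_iff,
        EReal.coe_eq_coe_iff, FixSet]
      exact gap1 y
    · exact absurd heq hsIn.1
    · exact hgt
  -- right gap (s', t) of Fix g
  set s' := sSup (FixSet g ∩ Icc x q) with hs'_def
  have hs'ne : (FixSet g ∩ Icc x q).Nonempty := ⟨x, hxg, le_refl x, hxq.le⟩
  have hs'bdd : BddAbove (FixSet g ∩ Icc x q) := ⟨q, fun y hy => hy.2.2⟩
  have hs'mem : s' ∈ FixSet g ∩ Icc x q :=
    (hgcl.inter isClosed_Icc).csSup_mem hs'ne hs'bdd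
  have hs'q : s' < q := lt_of_le_of_ne hs'mem.2.2 (fun e => hgq (by rw [← e]; exact hs'mem.1))
  have hxs' : x ≤ s' := hs'mem.2.1
  set t := sInf (FixSet g ∩ Ici q) with ht_def
  obtain ⟨z₀, hz₀g, hz₀⟩ := habove q
  have htne : (FixSet g ∩ Ici q).Nonempty := ⟨z₀, hz₀g, hz₀.le⟩
  have htbdd : BddBelow (FixSet g ∩ Ici q) := ⟨q, fun y hy => hy.2⟩
  have htmem : t ∈ FixSet g ∩ Ici q :=
    (hgcl.inter isClosed_Ici).csInf_mem htne htbdd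
  have hqt : q < t := lt_of_le_of_ne htmem.2 (fun e => hgq (by rw [e]; exact htmem.1))
  have gap2 : ∀ y : ℝ, ((s' ≤ y ∧ y ≤ t) ∧ g y = y) ↔ (y = s' ∨ y = t) := by
    intro y
    constructor
    · rintro ⟨⟨h1, h2⟩, hy⟩
      rcases le_or_gt y q with hyq | hyq
      · exact Or.inl (le_antisymm (le_csSup hs'bdd ⟨hy, hxs'.trans h1, hyq⟩) h1)
      · exact Or.inr (le_antisymm h2 (csInf_le htbdd ⟨hy, hyq.le⟩))
    · rintro (rfl | rfl)
      · exact ⟨⟨le_refl _, (hs'q.trans hqt).le⟩, hs'mem.1⟩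
      · exact ⟨⟨(hs'q.trans hqt).le, le_refl _⟩, htmem.1⟩
  have hps' : p < s' := hxp.trans_le hxs'
  have hs'In := hIn s' hps' hs'q
  have hs'_lt : h s' < s' := by
    rcases lt_trichotomy (h s') s' with hlt | heq | hgt
    · exact hlt
    · exact absurd heq hs'In.1
    · exfalso
      refine no_crossedAt G hnilp hgG hhG ⟨(s' : EReal), (t : EReal),
        EReal.coe_lt_coe_iff.mpr (hs'q.trans hqt), ?_, s', Or.inl rfl,
        EReal.coe_lt_coe_iff.mpr hgt, EReal.coe_lt_coe_iff.mpr (hs'In.2.2.trans hqt)⟩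
      ext y
      simp only [Set.mem_inter_iff, Set.mem_setOf_eq, EReal.coe_le_coe_iff,
        EReal.coe_eq_coe_iff, FixSet]
      exact gap2 y
  have hss' : s ≤ s' := hsx.trans hxs'
  rcases eq_or_lt_of_le hss' with heq | hlt
  · rw [heq] at hs_gt
    linarith
  · set F : ℝ → ℝ := fun z => h z - z with hF
    have hFc : Continuous F := h.continuous.sub continuous_id
    have hsub : Ioo (F s') (F s) ⊆ F '' Ioo s s' :=
      intermediate_value_Ioo' hlt.le hFc.continuousOn
    have h0 : (0 : ℝ) ∈ Ioo (F s') (F s) :=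
      ⟨by simp only [hF]; linarith, by simp only [hF]; linarith⟩
    obtain ⟨z, hz, hFz⟩ := hsub h0
    have hfz : h z = z := by
      have : h z - z = 0 := hFz
      linarith
    exact (hIn z (hps.trans hz.1) (hz.2.trans hs'q)).1 hfz

lemma tower_step (hnilp : Group.IsNilpotent ↥G) (hfix : ∀ g ∈ G, (FixSet g).Nonempty)
    {B : Subgroup HomeoR} (hBG : B ≤ G) (hB : ∀ w : ℝ, ∃ k ∈ B, k w ≠ w)
    {h : HomeoR} (hhB : h ∈ B) {p q : ℝ} (hpq : p < q)
    (hgap : FixSet h ∩ Icc p q = {p, q}) :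
    ∃ h' ∈ B, ∃ p' q' : ℝ, p' < p ∧ q < q' ∧ FixSet h' ∩ Icc p' q' = {p', q'} := by
  have grow : ∀ (h₀ : HomeoR), h₀ ∈ B → ∀ (p₀ q₀ : ℝ), p₀ < q₀ →
      FixSet h₀ ∩ Icc p₀ q₀ = {p₀, q₀} → ∀ (g : HomeoR), g ∈ B → g p₀ ≠ p₀ → g q₀ ≠ q₀ →
      ∃ h' ∈ B, ∃ p' q' : ℝ, p' < p₀ ∧ q₀ < q' ∧ FixSet h' ∩ Icc p' q' = {p', q'} := by
    intro h₀ hh₀ p₀ q₀ hpq₀ hgap₀ g hgB hgp hgq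
    have hub := fix_unbdd_above G hnilp hBG hB hgB (hfix g (hBG hgB))
    have hlb := fix_unbdd_below G hnilp hBG hB hgB (hfix g (hBG hgB))
    have hem := fix_empty_between G hnilp (hBG hh₀) (hBG hgB) hub hlb hpq₀ hgap₀ hgp hgq
    obtain ⟨P, Q, h1, h2, h3⟩ := gap_extract (isClosed_fixSet g) hub hlb hpq₀.le hem
    exact ⟨g, hgB, P, Q, h1, h2, h3⟩
  obtain ⟨g₁, hg₁B, hg₁⟩ := hB p
  by_cases hq1 : g₁ q = q
  · obtain ⟨g, hgB, hgp, hgq⟩ : ∃ g ∈ B, g p < p ∧ g q = q := by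
      rcases lt_or_gt_of_ne hg₁ with hlt | hgt
      · exact ⟨g₁, hg₁B, hlt, hq1⟩
      · refine ⟨g₁⁻¹, inv_mem hg₁B, ?_, inv_fixed hq1⟩
        have := g₁⁻¹.strictMono hgt
        rwa [inv_apply_apply] at this
    set h₁ := g * h * g⁻¹ with hh₁
    have hh₁B : h₁ ∈ B := mul_mem (mul_mem hgB hhB) (inv_mem hgB)
    have hgap₁ : FixSet h₁ ∩ Icc (g p) q = {g p, q} := by
      have := conj_gap g hgap
      rwa [hgq] at this
    obtain ⟨g₂, hg₂B, hg₂⟩ := hB q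
    by_cases hp2 : g₂ (g p) = g p
    · obtain ⟨g', hg'B, hg'q, hg'p⟩ : ∃ g' ∈ B, q < g' q ∧ g' (g p) = g p := by
        rcases lt_or_gt_of_ne hg₂ with hlt | hgt
        · refine ⟨g₂⁻¹, inv_mem hg₂B, ?_, inv_fixed hp2⟩
          have := g₂⁻¹.strictMono hlt
          rwa [inv_apply_apply] at this
        · exact ⟨g₂, hg₂B, hgt, hp2⟩
      have hgap₂ := conj_gap g' hgap₁
      rw [hg'p] at hgap₂
      exact ⟨g' * h₁ * g'⁻¹, mul_mem (mul_mem hg'B hh₁B) (inv_mem hg'B), g p, g' q,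
        hgp, hg'q, hgap₂⟩
    · obtain ⟨h', hh'B, p', q', h1, h2, h3⟩ :=
        grow h₁ hh₁B (g p) q (hgp.trans hpq) hgap₁ g₂ hg₂B hp2 hg₂
      exact ⟨h', hh'B, p', q', h1.trans hgp, h2, h3⟩
  · exact grow h hhB p q hpq hgap g₁ hg₁B hg₁ hq1

lemma initial_step (hnilp : Group.IsNilpotent ↥G) (hfix : ∀ g ∈ G, (FixSet g).Nonempty)
    {B : Subgroup HomeoR} (hBG : B ≤ G) (hB : ∀ w : ℝ, ∃ k ∈ B, k w ≠ w)
    {F : Set ℝ} (hInv : ∀ b ∈ B, ∀ y ∈ F, b y ∈ F)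
    {u v : ℝ} (huv : u < v) (hgapF : F ∩ Icc u v = {u, v}) :
    ∃ h₁ ∈ B, ∃ a₁ b₁ : ℝ, a₁ < u ∧ v < b₁ ∧ FixSet h₁ ∩ Icc a₁ b₁ = {a₁, b₁} := by
  have hiff : ∀ y : ℝ, (y ∈ F ∧ (u ≤ y ∧ y ≤ v)) ↔ (y = u ∨ y = v) := by
    intro y
    have := Set.ext_iff.mp hgapF y
    simpa [Set.mem_inter_iff, Set.mem_Icc, Set.mem_insert_iff, Set.mem_singleton_iff] using this
  have hv : v ∈ F := ((hiff v).mpr (Or.inr rfl)).1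
  obtain ⟨g₀, hg₀B, hg₀⟩ := hB v
  obtain ⟨g, hgB, hgv⟩ : ∃ g ∈ B, v < g v := by
    rcases lt_or_gt_of_ne hg₀ with hlt | hgt
    · refine ⟨g₀⁻¹, inv_mem hg₀B, ?_⟩
      have := g₀⁻¹.strictMono hlt
      rwa [inv_apply_apply] at this
    · exact ⟨g₀, hg₀B, hgt⟩
  have hgu : v ≤ g u := by
    by_contra hcon
    push_neg at hcon
    have h1 : g⁻¹ v ∈ F := hInv g⁻¹ (inv_mem hgB) v hv
    have h2 : g⁻¹ v < v := by
      have := g⁻¹.strictMono hgv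
      rwa [inv_apply_apply] at this
    have h3 : u < g⁻¹ v := by
      have := g⁻¹.strictMono hcon
      rwa [inv_apply_apply] at this
    rcases (hiff (g⁻¹ v)).mp ⟨h1, h3.le, h2.le⟩ with e | e
    · exact absurd e (ne_of_gt h3)
    · exact absurd e (ne_of_lt h2)
  have hempty : FixSet g ∩ Icc u v = ∅ := by
    rw [Set.eq_empty_iff_forall_notMem]
    rintro z ⟨hzfix, hz1, hz2⟩
    have hvz : v ≤ g z := hgu.trans (g.monotone hz1)
    rw [hzfix] at hvz
    have hzv : z = v := le_antisymm hz2 hvz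
    rw [hzv] at hzfix
    exact absurd hzfix (ne_of_gt hgv)
  have hub := fix_unbdd_above G hnilp hBG hB hgB (hfix g (hBG hgB))
  have hlb := fix_unbdd_below G hnilp hBG hB hgB (hfix g (hBG hgB))
  obtain ⟨P, Q, h1, h2, h3⟩ := gap_extract (isClosed_fixSet g) hub hlb huv.le hempty
  exact ⟨g, hgB, P, Q, h1, h2, h3⟩

lemma choose_AB (hnilp : Group.IsNilpotent ↥G) (hfix : ∀ g ∈ G, (FixSet g).Nonempty)
    (hglob : (⋂ g ∈ G, FixSet g) = ∅) :
    ∃ A B : Subgroup HomeoR, A ≤ B ∧ B ≤ G ∧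
      (∀ b ∈ B, ∀ a ∈ A, b * a * b⁻¹ ∈ A) ∧
      (∀ x ∈ B, ∀ y ∈ B, x * y * x⁻¹ * y⁻¹ ∈ A) ∧
      (∀ w : ℝ, ∃ k ∈ B, k w ≠ w) ∧
      (∀ b ∈ B, ∀ y ∈ (⋂ f ∈ A, FixSet f), b y ∈ ⋂ f ∈ A, FixSet f) ∧
      ∃ u v : ℝ, u < v ∧ (⋂ f ∈ A, FixSet f) ∩ Icc u v = {u, v} := by
  classical
  obtain ⟨n₀, hn₀⟩ := nilpotent_iff_lowerCentralSeries.mp hnilp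
  set K : ℕ → Subgroup HomeoR := fun n => (Subgroup.lowerCentralSeries (⊤ : Subgroup ↥G) n).map G.subtype with hK
  have hK0 : K 0 = G := by
    rw [hK]
    simp only [lowerCentralSeries_zero]
    rw [← MonoidHom.range_eq_map, Subgroup.range_subtype]
  have hKG : ∀ n, K n ≤ G := by
    intro n
    calc K n ≤ K 0 := Subgroup.map_mono (by rw [lowerCentralSeries_zero]; exact le_top)
      _ = G := hK0
  have hbot : (⋂ f ∈ K n₀, FixSet f).Nonempty := by
    refine ⟨0, Set.mem_iInter₂.mpr ?_⟩
    intro f hf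
    rw [hK] at hf
    simp only at hf
    rw [hn₀, Subgroup.map_bot] at hf
    have hf1 : f = 1 := Subgroup.mem_bot.mp hf
    rw [hf1]
    rfl
  have hexists : ∃ n, (⋂ f ∈ K n, FixSet f).Nonempty := ⟨n₀, hbot⟩
  set m := Nat.find hexists with hm_def
  have hmne : (⋂ f ∈ K m, FixSet f).Nonempty := Nat.find_spec hexists
  have hm0 : m ≠ 0 := by
    intro h
    have h2 := hmne
    rw [h, hK0, hglob] at h2
    exact Set.not_nonempty_empty h2
  set j := m - 1 with hj_def
  have hjm : j + 1 = m := Nat.succ_pred_eq_of_pos (Nat.pos_of_ne_zero hm0)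
  have hFBempty : (⋂ f ∈ K j, FixSet f) = ∅ :=
    Set.not_nonempty_iff_eq_empty.mp (Nat.find_min hexists (by omega))
  have hBmove : ∀ w : ℝ, ∃ k ∈ K j, k w ≠ w := by
    intro w
    by_contra hcon
    push_neg at hcon
    have hw : w ∈ ⋂ f ∈ K j, FixSet f := Set.mem_iInter₂.mpr (fun f hf => hcon f hf)
    rw [hFBempty] at hw
    exact hw
  have hBG : K j ≤ G := hKG j
  have hA0B : K m ≤ K j := Subgroup.map_mono (lowerCentralSeries_antitone _ (by omega))
  have hnormG : ∀ b ∈ G, ∀ a ∈ K m, b * a * b⁻¹ ∈ K m := by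
    intro b hb a ha
    obtain ⟨a', ha', rfl⟩ := ha
    refine Subgroup.mem_map.mpr ⟨(⟨b, hb⟩ : ↥G) * a' * (⟨b, hb⟩ : ↥G)⁻¹,
      (Subgroup.lowerCentralSeries_normal ⊤ m).conj_mem a' ha' ⟨b, hb⟩, rfl⟩
  have hcommB : ∀ x ∈ K j, ∀ y ∈ K j, x * y * x⁻¹ * y⁻¹ ∈ K m := by
    intro x hx y hy
    obtain ⟨x', hx', rfl⟩ := hx
    obtain ⟨y', hy', rfl⟩ := hy
    refine Subgroup.mem_map.mpr ⟨x' * y' * x'⁻¹ * y'⁻¹, ?_, rfl⟩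
    have hmem : x' * y' * x'⁻¹ * y'⁻¹ ∈ Subgroup.lowerCentralSeries (⊤ : Subgroup ↥G) (j + 1) := by
      rw [lowerCentralSeries_succ]
      exact Subgroup.subset_closure ⟨x', hx', y', Subgroup.mem_top y', rfl⟩
    rwa [hjm] at hmem
  have hInv0 : ∀ b ∈ K j, ∀ y ∈ (⋂ f ∈ K m, FixSet f), b y ∈ (⋂ f ∈ K m, FixSet f) := by
    intro b hb y hy
    rw [Set.mem_iInter₂] at hy ⊢
    intro a ha
    have hc : b⁻¹ * a * b ∈ K m := by
      have := hnormG b⁻¹ (inv_mem (hBG hb)) a ha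
      rwa [inv_inv] at this
    have hcy : (b⁻¹ * a * b) y = y := hy _ hc
    show a (b y) = b y
    have hcomp : b ((b⁻¹ * a * b) y) = a (b y) := by
      rw [mul_apply, mul_apply, apply_inv_apply]
    rw [← hcomp, hcy]
  have hFcl : IsClosed (⋂ f ∈ K m, FixSet f) :=
    isClosed_biInter (fun f _ => isClosed_fixSet f)
  by_cases hUniv : (⋂ f ∈ K m, FixSet f) = univ
  · -- the subgroup K j acts by commuting elements
    have habel : ∀ x ∈ K j, ∀ y ∈ K j, x * y = y * x := by
      intro x hx y hy
      have hmem := hcommB x hx y hy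
      have hone : x * y * x⁻¹ * y⁻¹ = 1 := by
        apply OrderIso.ext
        funext z
        have hz : z ∈ ⋂ f ∈ K m, FixSet f := by rw [hUniv]; exact Set.mem_univ z
        exact Set.mem_iInter₂.mp hz _ hmem
      have h2 : x * y = (x * y * x⁻¹ * y⁻¹) * (y * x) := by group
      rw [hone, one_mul] at h2
      exact h2
    obtain ⟨f, hfB, hf0⟩ := hBmove 0
    have hFz : (⋂ f' ∈ Subgroup.zpowers f, FixSet f') = FixSet f := by
      apply Set.Subset.antisymm
      · intro y hy
        exact Set.mem_iInter₂.mp hy f (Subgroup.mem_zpowers f)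
      · intro y hy
        rw [Set.mem_iInter₂]
        intro f' hf'
        obtain ⟨k, rfl⟩ := Subgroup.mem_zpowers_iff.mp hf'
        exact zpow_fixed hy k
    refine ⟨Subgroup.zpowers f, K j, Subgroup.zpowers_le.mpr hfB, hBG, ?_, ?_, hBmove, ?_, ?_⟩
    · intro b hb a ha
      obtain ⟨k, rfl⟩ := Subgroup.mem_zpowers_iff.mp ha
      have hbf : Commute b f := habel b hb f hfB
      have hq : b * f ^ k * b⁻¹ = f ^ k := by
        rw [(hbf.zpow_right k).eq, mul_assoc]; simp
      rw [hq]
      exact Subgroup.mem_zpowers_iff.mpr ⟨k, rfl⟩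
    · intro x hx y hy
      have hone : x * y * x⁻¹ * y⁻¹ = 1 := by
        have h2 : x * y * x⁻¹ * y⁻¹ = (x * y) * (y * x)⁻¹ := by group
        rw [h2, habel x hx y hy]; group
      rw [hone]
      exact one_mem _
    · intro b hb y hy
      rw [hFz] at hy ⊢
      show f (b y) = b y
      have hbf : Commute b f := habel b hb f hfB
      calc f (b y) = (f * b) y := rfl
        _ = (b * f) y := by rw [← hbf.eq]
        _ = b (f y) := rfl
        _ = b y := by rw [hy]
    · have hub := fix_unbdd_above G hnilp hBG hBmove hfB (hfix f (hBG hfB))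
      have hlb := fix_unbdd_below G hnilp hBG hBmove hfB (hfix f (hBG hfB))
      have hem : FixSet f ∩ Icc (0:ℝ) 0 = ∅ := by
        rw [Set.Icc_self, Set.eq_empty_iff_forall_notMem]
        rintro z ⟨hz1, hz2⟩
        rw [Set.mem_singleton_iff] at hz2
        rw [hz2] at hz1
        exact hf0 hz1
      obtain ⟨P, Q, h1, h2, h3⟩ := gap_extract (isClosed_fixSet f) hub hlb (le_refl 0) hem
      exact ⟨P, Q, h1.trans h2, by rw [hFz]; exact h3⟩
  · refine ⟨K m, K j, hA0B, hBG, fun b hb => hnormG b (hBG hb), hcommB, hBmove, hInv0, ?_⟩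
    have hub : ∀ r : ℝ, ∃ y ∈ (⋂ f ∈ K m, FixSet f), r < y := by
      intro r
      by_contra hcon
      push_neg at hcon
      have hbdd : BddAbove (⋂ f ∈ K m, FixSet f) := ⟨r, fun y hy => hcon y hy⟩
      have hPmem : sSup (⋂ f ∈ K m, FixSet f) ∈ ⋂ f ∈ K m, FixSet f :=
        hFcl.csSup_mem hmne hbdd
      obtain ⟨k, hkB, hk⟩ := hBmove (sSup (⋂ f ∈ K m, FixSet f))
      have h1 := hInv0 k hkB _ hPmem
      have h2 := hInv0 k⁻¹ (inv_mem hkB) _ hPmem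
      have h3 := le_csSup hbdd h1
      have h4 := le_csSup hbdd h2
      have h5 : sSup (⋂ f ∈ K m, FixSet f) ≤ k (sSup (⋂ f ∈ K m, FixSet f)) := by
        have := k.monotone h4
        rwa [apply_inv_apply] at this
      exact hk (le_antisymm h3 h5)
    have hlb : ∀ r : ℝ, ∃ y ∈ (⋂ f ∈ K m, FixSet f), y < r := by
      intro r
      by_contra hcon
      push_neg at hcon
      have hbdd : BddBelow (⋂ f ∈ K m, FixSet f) := ⟨r, fun y hy => hcon y hy⟩
      have hPmem : sInf (⋂ f ∈ K m, FixSet f) ∈ ⋂ f ∈ K m, FixSet f :=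
        hFcl.csInf_mem hmne hbdd
      obtain ⟨k, hkB, hk⟩ := hBmove (sInf (⋂ f ∈ K m, FixSet f))
      have h1 := hInv0 k hkB _ hPmem
      have h2 := hInv0 k⁻¹ (inv_mem hkB) _ hPmem
      have h3 := csInf_le hbdd h1
      have h4 := csInf_le hbdd h2
      have h5 : k (sInf (⋂ f ∈ K m, FixSet f)) ≤ sInf (⋂ f ∈ K m, FixSet f) := by
        have := k.monotone h4
        rwa [apply_inv_apply] at this
      exact hk (le_antisymm h5 h3)
    obtain ⟨w, hw⟩ : ∃ w, w ∉ (⋂ f ∈ K m, FixSet f) := by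
      by_contra hcon
      push_neg at hcon
      exact hUniv (Set.eq_univ_of_forall hcon)
    have hem : (⋂ f ∈ K m, FixSet f) ∩ Icc w w = ∅ := by
      rw [Set.Icc_self, Set.eq_empty_iff_forall_notMem]
      rintro z ⟨hz1, hz2⟩
      rw [Set.mem_singleton_iff] at hz2
      rw [hz2] at hz1
      exact hw hz1
    obtain ⟨P, Q, h1, h2, h3⟩ := gap_extract hFcl hub hlb (le_refl w) hem
    exact ⟨P, Q, h1.trans h2, h3⟩

end NilpTower

theorem nilpotent_tower (G : Subgroup HomeoR) (hnilp : Group.IsNilpotent ↥G)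
    (hfix : ∀ g ∈ G, (FixSet g).Nonempty)
    (hglob : (⋂ g ∈ G, FixSet g) = ∅) :
    ∃ (A B : Subgroup HomeoR), A ≤ B ∧ B ≤ G ∧
      (∀ b ∈ B, ∀ a ∈ A, b * a * b⁻¹ ∈ A) ∧
      (∀ x ∈ B, ∀ y ∈ B, x * y * x⁻¹ * y⁻¹ ∈ A) ∧
      ∃ (a b : ℕ → ℝ) (h : ℕ → HomeoR),
        (∀ i, a i < b i) ∧
        (∀ i : ℕ, h (i+1) ∈ B) ∧
        (∀ i, Icc (a i) (b i) ⊆ Ioo (a (i+1)) (b (i+1))) ∧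
        ((⋂ f ∈ A, FixSet f) ∩ Icc (a 0) (b 0) = {a 0, b 0}) ∧
        (∀ i : ℕ, FixSet (h (i+1)) ∩ Icc (a (i+1)) (b (i+1)) = {a (i+1), b (i+1)}) := by
  classical
  obtain ⟨A, B, hAB, hBG, hnorm, hcomm, hBmove, hInv, u, v, huv, hgapF⟩ :=
    NilpTower.choose_AB G hnilp hfix hglob
  obtain ⟨h₁, hh₁B, a₁, b₁, ha₁, hb₁, hgap₁⟩ :=
    NilpTower.initial_step G hnilp hfix hBG hBmove hInv huv hgapF
  let T := {t : ℝ × ℝ × HomeoR //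
    t.2.2 ∈ B ∧ t.1 < t.2.1 ∧ FixSet t.2.2 ∩ Icc t.1 t.2.1 = {t.1, t.2.1}}
  have hstep : ∀ t : T, ∃ t' : T, t'.1.1 < t.1.1 ∧ t.1.2.1 < t'.1.2.1 := by
    rintro ⟨⟨p, q, h⟩, hhB, hpq, hgap⟩
    obtain ⟨h', hh'B, p', q', h1, h2, h3⟩ :=
      NilpTower.tower_step G hnilp hfix hBG hBmove hhB hpq hgap
    exact ⟨⟨(p', q', h'), hh'B, (h1.trans hpq).trans h2, h3⟩, h1, h2⟩
  choose nxt hlt1 hlt2 using hstep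
  have hT0 : ((a₁, b₁, h₁) : ℝ × ℝ × HomeoR).2.2 ∈ B ∧ a₁ < b₁ ∧
      FixSet h₁ ∩ Icc a₁ b₁ = {a₁, b₁} :=
    ⟨hh₁B, (ha₁.trans huv).trans hb₁, hgap₁⟩
  let seq : ℕ → T := fun n => Nat.rec (⟨(a₁, b₁, h₁), hT0⟩ : T) (fun _ t => nxt t) n
  have hseq : ∀ n, seq (n + 1) = nxt (seq n) := fun n => rfl
  refine ⟨A, B, hAB, hBG, hnorm, hcomm,
    (fun i => Nat.casesOn i u (fun k => (seq k).1.1)),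
    (fun i => Nat.casesOn i v (fun k => (seq k).1.2.1)),
    (fun i => Nat.casesOn i 1 (fun k => (seq k).1.2.2)), ?_, ?_, ?_, ?_, ?_⟩
  · intro i
    cases i with
    | zero => exact huv
    | succ k => exact (seq k).2.2.1
  · intro i
    exact (seq i).2.1
  · intro i
    cases i with
    | zero =>
        intro z hz
        exact ⟨ha₁.trans_le hz.1, hz.2.trans_lt hb₁⟩
    | succ k =>
        intro z hz
        have hz' : z ∈ Icc ((seq k).1.1) ((seq k).1.2.1) := hz
        show z ∈ Ioo ((seq (k + 1)).1.1) ((seq (k + 1)).1.2.1)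
        rw [hseq k]
        exact ⟨(hlt1 (seq k)).trans_le hz'.1, hz'.2.trans_lt (hlt2 (seq k))⟩
  · exact hgapF
  · intro i
    exact (seq i).2.2.2
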